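/- Let p, q, r be integers with p ≠ 0, gcd(p, q) = 1, |p| ≥ q ≥ 1, r ≥ 2, r odd and p even, and set n = qr, m = |p|·r. Write x ∈ ℤ^n as the concatenation of q blocks b_1, …, b_q ∈ ℤ^r (so b_j = (x_{(j−1)r+1}, …, x_{jr})). Then T_n^m(x) = x if and only if b_1 = b_2 = ⋯ = b_q (with b_1 ∈ ℤ^r arbitrary). -/
import Mathlib


/-- The twist map `T_n : ℤ^n → ℤ^n`,
`T_n(x_1,…,x_n) = (2x_1 − x_2, 2x_1 − x_3, …, 2x_1 − x_n, x_1)` (0-indexed). -/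
def twist (n : ℕ) (x : Fin n → ℤ) : Fin n → ℤ :=
  fun i => if h : (i : ℕ) + 1 < n then 2 * x ⟨0, i.pos⟩ - x ⟨(i : ℕ) + 1, h⟩ else x ⟨0, i.pos⟩

/-- The `j`-th block (of length `R`) of a vector `x ∈ ℤ^{QR}`. -/
def blk (Q R : ℕ) (x : Fin (Q * R) → ℤ) (j : Fin Q) (i : Fin R) : ℤ :=
  x ⟨(j : ℕ) * R + (i : ℕ), by
    calc (j : ℕ) * R + (i : ℕ) < (j : ℕ) * R + R := Nat.add_lt_add_left i.2 _
      _ = ((j : ℕ) + 1) * R := (Nat.succ_mul _ _).symm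
      _ ≤ Q * R := Nat.mul_le_mul_right R j.2⟩

/-- `Δ(a) = a_1 − a_2 + a_3 − ⋯ + (−1)^{r+1} a_r` (0-indexed signs `(−1)^i`). -/
def delta (R : ℕ) (a : Fin R → ℤ) : ℤ := ∑ i : Fin R, (-1 : ℤ) ^ (i : ℕ) * a i

namespace Stmt6Aux

/-- The periodic extension of `x` to `ℕ`. -/
def Xf {n : ℕ} (hn : 0 < n) (x : Fin n → ℤ) (k : ℕ) : ℤ :=
  x ⟨k % n, Nat.mod_lt k hn⟩

lemma Xf_mod {n : ℕ} (hn : 0 < n) (x : Fin n → ℤ) (k : ℕ) :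
    Xf hn x (k % n) = Xf hn x k := by
  unfold Xf
  congr 1
  exact Fin.ext (Nat.mod_mod_of_dvd k dvd_rfl)

lemma Xf_of_lt {n : ℕ} (hn : 0 < n) (x : Fin n → ℤ) (i : Fin n) :
    Xf hn x (i : ℕ) = x i := by
  unfold Xf
  congr 1
  exact Fin.ext (Nat.mod_eq_of_lt i.2)

lemma twist_apply {n : ℕ} (hn : 0 < n) (x : Fin n → ℤ) (i : Fin n) :
    twist n x i = 2 * Xf hn x 0 - Xf hn x ((i : ℕ) + 1) := by
  unfold twist Xf
  have h0 : (0 : ℕ) % n = 0 := Nat.zero_mod n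
  have e1 : (⟨0 % n, Nat.mod_lt 0 hn⟩ : Fin n) = ⟨0, i.pos⟩ := Fin.ext h0
  by_cases h : (i : ℕ) + 1 < n
  · rw [dif_pos h]
    have e2 : (⟨((i : ℕ) + 1) % n, Nat.mod_lt _ hn⟩ : Fin n) = ⟨(i : ℕ) + 1, h⟩ :=
      Fin.ext (Nat.mod_eq_of_lt h)
    rw [e1, e2]
  · rw [dif_neg h]
    have hin : (i : ℕ) + 1 = n := le_antisymm i.2 (not_lt.mp h)
    have e3 : (⟨((i : ℕ) + 1) % n, Nat.mod_lt _ hn⟩ : Fin n) = ⟨0, i.pos⟩ :=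
      Fin.ext (by show ((i : ℕ) + 1) % n = 0; rw [hin, Nat.mod_self])
    rw [e1, e3]
    ring

lemma iter_twist {n : ℕ} (hn : 0 < n) (x : Fin n → ℤ) (m : ℕ) (i : Fin n) :
    (twist n)^[m] x i =
      (∑ k ∈ Finset.range m, 2 * (-1 : ℤ) ^ k * Xf hn x k)
        + (-1 : ℤ) ^ m * Xf hn x ((i : ℕ) + m) := by
  induction m generalizing i with
  | zero => simp [Xf_of_lt hn x i]
  | succ m ih =>
    rw [Function.iterate_succ_apply', twist_apply hn ((twist n)^[m] x) i]
    have hXf0 : Xf hn ((twist n)^[m] x) 0 = ((twist n)^[m] x) ⟨0, hn⟩ :=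
      Xf_of_lt hn _ ⟨0, hn⟩
    have h0 : ((twist n)^[m] x) ⟨0, hn⟩ =
        (∑ k ∈ Finset.range m, 2 * (-1 : ℤ) ^ k * Xf hn x k)
          + (-1 : ℤ) ^ m * Xf hn x m := by
      have := ih ⟨0, hn⟩
      simpa using this
    have hi1 : ((i : ℕ) + 1) % n < n := Nat.mod_lt _ hn
    have hXf1 : Xf hn ((twist n)^[m] x) ((i : ℕ) + 1) =
        ((twist n)^[m] x) ⟨((i : ℕ) + 1) % n, hi1⟩ := by
      rw [← Xf_mod hn _ ((i : ℕ) + 1)]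
      exact Xf_of_lt hn _ ⟨((i : ℕ) + 1) % n, hi1⟩
    have h1 : ((twist n)^[m] x) ⟨((i : ℕ) + 1) % n, hi1⟩ =
        (∑ k ∈ Finset.range m, 2 * (-1 : ℤ) ^ k * Xf hn x k)
          + (-1 : ℤ) ^ m * Xf hn x ((i : ℕ) + 1 + m) := by
      have h2 := ih ⟨((i : ℕ) + 1) % n, hi1⟩
      rw [h2]
      congr 2
      rw [← Xf_mod hn x (((i : ℕ) + 1) % n + m), Nat.mod_add_mod, Xf_mod]
    rw [hXf0, h0, hXf1, h1, Finset.sum_range_succ]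
    have harith : (i : ℕ) + 1 + m = (i : ℕ) + (m + 1) := by omega
    rw [harith, pow_succ]
    ring

lemma per_mul {X : ℕ → ℤ} {a : ℕ} (ha : ∀ k, X (k + a) = X k) :
    ∀ t k, X (k + t * a) = X k := by
  intro t
  induction t with
  | zero => simp
  | succ t ih =>
    intro k
    have : k + (t + 1) * a = (k + t * a) + a := by ring
    rw [this, ha, ih]

lemma per_mod {X : ℕ → ℤ} {a b : ℕ} (ha : ∀ k, X (k + a) = X k)
    (hb : ∀ k, X (k + b) = X k) : ∀ k, X (k + b % a) = X k := by
  intro k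
  have h1 := per_mul ha (b / a) (k + b % a)
  have h2 : k + b % a + b / a * a = k + b := by
    rw [add_assoc, Nat.mod_add_div' b a]
  rw [h2, hb k] at h1
  exact h1.symm

lemma per_gcd {X : ℕ → ℤ} : ∀ a b : ℕ, (∀ k, X (k + a) = X k) →
    (∀ k, X (k + b) = X k) → ∀ k, X (k + Nat.gcd a b) = X k := by
  intro a b
  induction a, b using Nat.gcd.induction with
  | H0 b => intro _ hb; rw [Nat.gcd_zero_left]; exact hb
  | H1 a b ha ih =>
    intro ha' hb'
    rw [Nat.gcd_rec]
    exact ih (per_mod ha' hb') ha'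

end Stmt6Aux

open Stmt6Aux in
theorem stmt_6 (p q r : ℤ) (hp : p ≠ 0) (hgcd : Int.gcd p q = 1)
    (hq1 : 1 ≤ q) (hqp : q ≤ |p|) (hr2 : 2 ≤ r) (hro : Odd r) (hpe : Even p)
    (Q R m : ℕ) (hQ : (Q : ℤ) = q) (hR : (R : ℤ) = r) (hm : (m : ℤ) = |p| * r)
    (x : Fin (Q * R) → ℤ) :
    (twist (Q * R))^[m] x = x ↔
      ∃ a : Fin R → ℤ, ∀ (j : Fin Q) (i : Fin R), blk Q R x j i = a i := by
  have hQ1 : 1 ≤ Q := by exact_mod_cast hQ ▸ hq1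
  have hR2 : 2 ≤ R := by exact_mod_cast hR ▸ hr2
  have hR0 : 0 < R := by omega
  have hn : 0 < Q * R := Nat.mul_pos (by omega) hR0
  have hmPR : m = p.natAbs * R := by
    have : (m : ℤ) = ((p.natAbs * R : ℕ) : ℤ) := by
      rw [hm, Int.abs_eq_natAbs, ← hR]; push_cast; ring
    exact_mod_cast this
  have hPeven : Even p.natAbs := Int.natAbs_even.mpr hpe
  have hmeven : Even m := by rw [hmPR]; exact hPeven.mul_right R
  have hQnat : q.natAbs = Q := by rw [← hQ]; exact Int.natAbs_natCast Q
  have hcop : Nat.gcd p.natAbs Q = 1 := by rw [← hQnat]; exact hgcd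
  have hRodd : Odd R := by
    have : Odd ((R : ℤ)) := hR ▸ hro
    exact_mod_cast this
  have hRdvdn : R ∣ Q * R := dvd_mul_left R Q
  have hiter : ∀ i : Fin (Q * R), (twist (Q * R))^[m] x i =
      (∑ k ∈ Finset.range m, 2 * (-1 : ℤ) ^ k * Xf hn x k)
        + Xf hn x ((i : ℕ) + m) := by
    intro i
    rw [iter_twist hn x m i, hmeven.neg_one_pow, one_mul]
  have hXmod : ∀ k, Xf hn x (k % (Q * R)) = Xf hn x k := fun k => Xf_mod hn x k
  have hXlt : ∀ i : Fin (Q * R), Xf hn x (i : ℕ) = x i := fun i => Xf_of_lt hn x i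
  constructor
  · -- forward direction
    intro h
    obtain ⟨C, hCdef⟩ : ∃ C : ℤ,
        (∑ k ∈ Finset.range m, 2 * (-1 : ℤ) ^ k * Xf hn x k) = C := ⟨_, rfl⟩
    rw [hCdef] at hiter
    have key : ∀ k : ℕ, Xf hn x (k + m) = Xf hn x k - C := by
      intro k
      have hk : k % (Q * R) < Q * R := Nat.mod_lt k hn
      have h1 := hiter ⟨k % (Q * R), hk⟩
      rw [congrFun h ⟨k % (Q * R), hk⟩] at h1
      have h2 : Xf hn x (k % (Q * R) + m) = Xf hn x (k + m) := by
        rw [← hXmod (k % (Q * R) + m), Nat.mod_add_mod, hXmod]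
      have h3 : x (⟨k % (Q * R), hk⟩ : Fin (Q * R)) = Xf hn x k := by
        rw [← hXlt ⟨k % (Q * R), hk⟩]; exact hXmod k
      simp only [h2, h3] at h1
      linarith
    have key2 : ∀ t k, Xf hn x (k + t * m) = Xf hn x k - t * C := by
      intro t
      induction t with
      | zero => simp
      | succ t ih =>
        intro k
        have harr : k + (t + 1) * m = (k + t * m) + m := by ring
        rw [harr, key, ih]
        push_cast
        ring
    have hCzero : C = 0 := by
      have h1 := key2 Q 0
      have h2 : (0 + Q * m) % (Q * R) = 0 % (Q * R) := by
        rw [hmPR]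
        have e : Q * (p.natAbs * R) = 0 + p.natAbs * (Q * R) := by ring
        rw [Nat.zero_add, e]
        exact Nat.add_mul_mod_self_right 0 p.natAbs (Q * R)
      have h3 : Xf hn x (0 + Q * m) = Xf hn x 0 := by
        rw [← hXmod (0 + Q * m), h2, hXmod]
      rw [h3] at h1
      have hQz : (Q : ℤ) ≠ 0 := by rw [hQ]; omega
      have : (Q : ℤ) * C = 0 := by linarith
      exact (mul_eq_zero.mp this).resolve_left hQz
    have hperm : ∀ k, Xf hn x (k + m) = Xf hn x k := by
      intro k; rw [key k, hCzero]; ring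
    have hpern : ∀ k, Xf hn x (k + Q * R) = Xf hn x k := by
      intro k
      rw [← hXmod (k + Q * R), Nat.add_mod_right, hXmod]
    have hgcdmn : Nat.gcd m (Q * R) = R := by
      rw [hmPR, Nat.gcd_mul_right p.natAbs R Q, hcop, one_mul]
    have hperR : ∀ k, Xf hn x (k + R) = Xf hn x k := by
      have := per_gcd m (Q * R) hperm hpern
      rwa [hgcdmn] at this
    refine ⟨fun i => Xf hn x (i : ℕ), ?_⟩
    intro j i
    show blk Q R x j i = Xf hn x (i : ℕ)
    have hlt : (j : ℕ) * R + (i : ℕ) < Q * R := by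
      calc (j : ℕ) * R + (i : ℕ) < (j : ℕ) * R + R := Nat.add_lt_add_left i.2 _
        _ = ((j : ℕ) + 1) * R := (Nat.succ_mul _ _).symm
        _ ≤ Q * R := Nat.mul_le_mul_right R j.2
    have h1 : blk Q R x j i = Xf hn x ((j : ℕ) * R + (i : ℕ)) := by
      unfold blk Xf
      congr 1
      exact Fin.ext (Nat.mod_eq_of_lt hlt).symm
    rw [h1]
    have e : (j : ℕ) * R + (i : ℕ) = (i : ℕ) + (j : ℕ) * R := by ring
    rw [e]
    exact per_mul hperR (j : ℕ) (i : ℕ)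
  · -- backward direction
    rintro ⟨a, ha⟩
    have hXR : ∀ k, Xf hn x k = a ⟨k % R, Nat.mod_lt k hR0⟩ := by
      intro k
      have hk : k % (Q * R) < Q * R := Nat.mod_lt k hn
      have hjlt : k % (Q * R) / R < Q := by
        rw [Nat.div_lt_iff_lt_mul hR0]
        exact hk
      have hilt : k % (Q * R) % R < R := Nat.mod_lt _ hR0
      have hKeq : k % (Q * R) / R * R + k % (Q * R) % R = k % (Q * R) :=
        Nat.div_add_mod' (k % (Q * R)) R
      have hblk : blk Q R x ⟨k % (Q * R) / R, hjlt⟩ ⟨k % (Q * R) % R, hilt⟩ =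
          x ⟨k % (Q * R), hk⟩ := by
        unfold blk
        congr 1
        exact Fin.ext hKeq
      have hXk : Xf hn x k = x ⟨k % (Q * R), hk⟩ := rfl
      rw [hXk, ← hblk, ha]
      congr 1
      exact Fin.ext (Nat.mod_mod_of_dvd k hRdvdn)
    have hperR : ∀ k, Xf hn x (k + R) = Xf hn x k := by
      intro k
      rw [hXR (k + R), hXR k]
      congr 1
      exact Fin.ext (Nat.add_mod_right k R)
    have hperm : ∀ k, Xf hn x (k + m) = Xf hn x k := by
      intro k
      have := per_mul hperR p.natAbs k
      rwa [← hmPR] at this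
    have hsum : ∀ t : ℕ, ∑ k ∈ Finset.range (t * R), 2 * (-1 : ℤ) ^ k * Xf hn x k =
        (∑ b ∈ Finset.range t, (-1 : ℤ) ^ b) *
          (∑ i ∈ Finset.range R, 2 * (-1 : ℤ) ^ i * Xf hn x i) := by
      intro t
      induction t with
      | zero => simp
      | succ t ih =>
        have h1 : (t + 1) * R = t * R + R := by ring
        rw [h1, Finset.sum_range_add, ih, Finset.sum_range_succ]
        have h2 : ∀ i ∈ Finset.range R,
            2 * (-1 : ℤ) ^ (t * R + i) * Xf hn x (t * R + i) =
              (-1 : ℤ) ^ t * (2 * (-1 : ℤ) ^ i * Xf hn x i) := by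
          intro i _
          have hXi : Xf hn x (t * R + i) = Xf hn x i := by
            have := per_mul hperR t i
            rwa [add_comm] at this
          have hpow : (-1 : ℤ) ^ (t * R) = (-1 : ℤ) ^ t := by
            rw [pow_mul]
            rcases Nat.even_or_odd t with ht | ht
            · rw [ht.neg_one_pow, one_pow]
            · rw [ht.neg_one_pow, hRodd.neg_one_pow]
          rw [hXi, pow_add, hpow]
          ring
        rw [Finset.sum_congr rfl h2, ← Finset.mul_sum]
        ring
    have hCzero : (∑ k ∈ Finset.range m, 2 * (-1 : ℤ) ^ k * Xf hn x k) = 0 := by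
      rw [hmPR, hsum p.natAbs, neg_one_geom_sum, if_pos hPeven, zero_mul]
    funext i
    rw [hiter i, hCzero, zero_add, ← hXlt i]
    exact hperm (i : ℕ)
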